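/- arXiv:math/0512383 — 4 statements merged into one kernel-verified Lean document; each statement's English description precedes it below -/
import Mathlib

section
/- Let M be a module over R, and for 1 ≤ i,j ≤ m let d_j, S^i : M → M be linear maps such that the d_j pairwise commute, the S^i pairwise commute, and S^i ∘ d_j − d_j ∘ S^i = r·δ^i_j·id for a fixed scalar r. Then for every natural number p and every index j, (Σ over (i_1,...,i_p) of d_{i_1}···d_{i_p} S^{i_1}···S^{i_p}) ∘ d_j = d_j ∘ (Σ over (i_1,...,i_p) of d_{i_1}···d_{i_p} S^{i_1}···S^{i_p}) + r·p·d_j ∘ (Σ over (i_1,...,i_{p−1}) of d_{i_1}···d_{i_{p−1}} S^{i_1}···S^{i_{p−1}}), where all indices range over {1,...,m} and summation over repeated indices is understood. -/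
open Module

/-- Lemma 3 of the paper: Let `M` be an ℝ-module and, for
`1 ≤ i, j ≤ m`, let `d j, S i : M → M` be linear maps such that the `d j` pairwise
commute, the `S i` pairwise commute, and `S i ∘ d j − d j ∘ S i = r·δ^i_j·id` for a
fixed scalar `r`.  Then for every natural number `p ≥ 1` and every index `j`,
`(Σ_{i₁,…,i_p} d_{i₁}⋯d_{i_p} S^{i₁}⋯S^{i_p}) ∘ d_j
  = d_j ∘ (Σ_{i₁,…,i_p} d_{i₁}⋯d_{i_p} S^{i₁}⋯S^{i_p})
    + r·p· d_j ∘ (Σ_{i₁,…,i_{p−1}} d_{i₁}⋯d_{i_{p−1}} S^{i₁}⋯S^{i_{p−1}})`,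
where all indices range over `{1,…,m}`.  (Composition of endomorphisms is written
multiplicatively in `Module.End ℝ M`.) -/
theorem lemma3_sum_commutation
    (M : Type) [AddCommGroup M] [Module ℝ M] (m : ℕ)
    (d S : Fin m → Module.End ℝ M) (r : ℝ)
    (hd : ∀ i j, d i * d j = d j * d i)
    (hS : ∀ i j, S i * S j = S j * S i)
    (hSd : ∀ i j, S i * d j - d j * S i = (if i = j then r else 0) • (1 : Module.End ℝ M))
    (A : ℕ → Module.End ℝ M)
    (hA : ∀ p, A p = ∑ i : Fin p → Fin m,
      (List.ofFn fun l => d (i l)).prod * (List.ofFn fun l => S (i l)).prod)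
    (p : ℕ) (hp : 1 ≤ p) (j : Fin m) :
    A p * d j = d j * A p + ((r * (p : ℝ)) • (d j * A (p - 1))) := by
  have hA0 : A 0 = 1 := by rw [hA]; simp
  have hSd' : ∀ k, S k * d j = (if k = j then r else 0) • 1 + d j * S k := by
    intro k
    have := hSd k j
    rw [sub_eq_iff_eq_add] at this
    exact this
  have hstep : ∀ q : ℕ, A (q+1) = ∑ k : Fin m, d k * A q * S k := by
    intro q
    rw [hA (q+1), ← Equiv.sum_comp (Fin.consEquiv fun _ : Fin (q+1) => Fin m)]
    rw [Fintype.sum_prod_type]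
    refine Finset.sum_congr rfl fun k _ => ?_
    rw [hA q, Finset.mul_sum, Finset.sum_mul]
    refine Finset.sum_congr rfl fun f _ => ?_
    have hc : Commute (S k) (List.ofFn fun l => S (f l)).prod := by
      apply Commute.list_prod_right
      intro x hx
      simp only [List.mem_ofFn] at hx
      obtain ⟨l, rfl⟩ := hx
      exact hS k (f l)
    simp only [Fin.consEquiv_apply, List.ofFn_succ, Fin.cons_zero, Fin.cons_succ,
      List.prod_cons, mul_assoc, hc.eq]
  obtain ⟨q, rfl⟩ : ∃ q, p = q + 1 := ⟨p - 1, (Nat.succ_pred_eq_of_pos hp).symm⟩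
  clear hp
  simp only [Nat.add_sub_cancel]
  induction q with
  | zero =>
    rw [hstep 0, hA0]
    simp only [mul_one, Nat.cast_one, Nat.zero_add]
    rw [Finset.sum_mul, Finset.mul_sum]
    have h1 : ∀ k : Fin m, d k * S k * d j
        = d j * (d k * S k) + (if k = j then r else 0) • d k := by
      intro k
      rw [mul_assoc, hSd' k, mul_add, mul_smul_comm, mul_one, ← mul_assoc,
        hd k j, mul_assoc]
      abel
    rw [Finset.sum_congr rfl fun k _ => h1 k, Finset.sum_add_distrib]
    simp only [ite_smul, zero_smul, Finset.sum_ite_eq', Finset.mem_univ, if_true]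
  | succ n ih =>
    have ih' : A (n+1) * d j = d j * A (n+1) + (r * ((n:ℝ)+1)) • (d j * A n) := by
      rw [ih]; push_cast; ring_nf
    rw [hstep (n+1), Finset.sum_mul]
    have h1 : ∀ k : Fin m, d k * A (n+1) * S k * d j
        = (if k = j then r else 0) • (d k * A (n+1))
          + d j * (d k * A (n+1) * S k)
          + (r * ((n:ℝ)+1)) • (d j * (d k * A n * S k)) := by
      intro k
      calc d k * A (n+1) * S k * d j
          = d k * A (n+1) * (S k * d j) := by rw [mul_assoc]
        _ = d k * A (n+1) * ((if k = j then r else 0) • 1 + d j * S k) := by rw [hSd' k]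
        _ = (if k = j then r else 0) • (d k * A (n+1)) + d k * (A (n+1) * d j) * S k := by
            rw [mul_add, mul_smul_comm, mul_one]; simp only [mul_assoc]
        _ = (if k = j then r else 0) • (d k * A (n+1))
              + d k * (d j * A (n+1) + (r * ((n:ℝ)+1)) • (d j * A n)) * S k := by
            rw [ih']
        _ = (if k = j then r else 0) • (d k * A (n+1))
              + d j * (d k * A (n+1) * S k)
              + (r * ((n:ℝ)+1)) • (d j * (d k * A n * S k)) := by
            simp only [mul_add, add_mul, mul_smul_comm, smul_mul_assoc, ← mul_assoc, hd k j]
            abel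
    rw [Finset.sum_congr rfl fun k _ => h1 k, Finset.sum_add_distrib, Finset.sum_add_distrib]
    simp only [ite_smul, zero_smul, Finset.sum_ite_eq', Finset.mem_univ, if_true]
    rw [← Finset.mul_sum, ← Finset.smul_sum, ← Finset.mul_sum, ← hstep (n+1), ← hstep n]
    push_cast
    match_scalars <;> ring
end

section
/- Let M be a module and d_j, S^i (1 ≤ i,j ≤ m) linear endomorphisms of M such that the d_j pairwise commute, the S^i pairwise commute, and S^i d_j − d_j S^i = r δ^i_j id for a fixed scalar r. For a multi-index J write d_J and S^J for the corresponding products of operators. Then for every natural number p ≥ 1 and every j, Σ_{|I|=p} (|I|!/I!) d_I S^I d_j = d_j ( Σ_{|I|=p} (|I|!/I!) d_I S^I + r·p·Σ_{|J|=p−1} (|J|!/J!) d_J S^J ). -/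
open Finset

section aux

variable {β : Type*} [Monoid β]

lemma aux_ofFn_prod_eq_noncommProd {n : ℕ} (f : Fin n → β)
    (comm : ((Finset.univ : Finset (Fin n)) : Set (Fin n)).Pairwise fun a b => Commute (f a) (f b)) :
    (List.ofFn f).prod = Finset.univ.noncommProd f comm := by
  rw [Finset.noncommProd, ← Multiset.noncommProd_coe (List.ofFn f)
    (by rw [← Fin.univ_val_map f]; exact Finset.noncommProd_lemma _ f comm)]
  congr 1
  exact (Fin.univ_val_map f).symm

lemma aux_extract {n : ℕ} (g : Fin n → β) (hg : ∀ i k, Commute (g i) (g k)) (j : Fin n) :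
    (List.ofFn g).prod
      = g j * ((Finset.univ.erase j).noncommProd g (fun a _ b _ _ => hg a b)) := by
  rw [aux_ofFn_prod_eq_noncommProd g (fun a _ b _ _ => hg a b)]
  exact (Finset.mul_noncommProd_erase Finset.univ (Finset.mem_univ j) g _).symm

lemma aux_pow_comm {A : Type*} [Ring A] [Algebra ℝ A] (a b : A) (c : ℝ)
    (h : a * b = b * a + c • (1 : A)) (n : ℕ) :
    a ^ n * b = b * a ^ n + ((n : ℝ) * c) • a ^ (n - 1) := by
  induction n with
  | zero => simp
  | succ k ih =>
    have h1 : a ^ (k+1) * b = (a ^ k * b) * a + c • a ^ k := by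
      rw [pow_succ, mul_assoc, h, mul_add, ← mul_assoc, mul_smul_comm, mul_one]
    rw [h1, ih]
    cases k with
    | zero => simp
    | succ l =>
      simp only [Nat.add_sub_cancel, add_mul, smul_mul_assoc, mul_assoc, ← pow_succ]
      push_cast
      module

lemma aux_w {m : ℕ} (p : ℕ) (hp : 1 ≤ p) (J : Fin m → ℕ) (j : Fin m)
    (hJ : ∑ i, J i = p - 1) :
    (((∑ i, Function.update J j (J j + 1) i).factorial : ℝ) /
        ∏ i, ((Function.update J j (J j + 1) i).factorial : ℝ)) * ((J j : ℝ) + 1)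
      = (p : ℝ) * (((∑ i, J i).factorial : ℝ) / ∏ i, ((J i).factorial : ℝ)) := by
  have hsum : ∑ i, Function.update J j (J j + 1) i = p := by
    rw [Finset.sum_update_of_mem (Finset.mem_univ j), Finset.sdiff_singleton_eq_erase]
    have h2 : J j + ∑ i ∈ Finset.univ.erase j, J i = ∑ i, J i :=
      Finset.add_sum_erase _ J (Finset.mem_univ j)
    omega
  have hprod : ∏ i, ((Function.update J j (J j + 1) i).factorial : ℝ)
      = ((J j : ℝ) + 1) * ∏ i, ((J i).factorial : ℝ) := by
    have hfn : (fun i => (((Function.update J j (J j + 1)) i).factorial : ℝ))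
        = Function.update (fun i => ((J i).factorial : ℝ)) j (((J j + 1).factorial : ℝ)) := by
      funext i
      by_cases hij : i = j
      · subst hij; simp
      · simp [Function.update_of_ne hij]
    rw [hfn, Finset.prod_update_of_mem (Finset.mem_univ j), Finset.sdiff_singleton_eq_erase]
    rw [← Finset.mul_prod_erase _ (fun i => ((J i).factorial : ℝ)) (Finset.mem_univ j)]
    rw [Nat.factorial_succ]
    push_cast
    ring
  rw [hsum, hprod, hJ]
  have hfac : (p.factorial : ℝ) = (p : ℝ) * ((p - 1).factorial : ℝ) := by
    rw_mod_cast [← Nat.mul_factorial_pred (by omega : p ≠ 0)]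
  have hne : (∏ i, ((J i).factorial : ℝ)) ≠ 0 := by positivity
  have hne2 : ((J j : ℝ) + 1) ≠ 0 := by positivity
  rw [hfac]
  field_simp

end aux

/-- Lemma 4 of the paper: With `M` an ℝ-module and commuting families
`d j`, `S i` of endomorphisms satisfying `S i d j − d j S i = r δ^i_j id`, write
`d_J = d₁^{J 1} ⋯ d_m^{J m}` and `S^J = (S¹)^{J 1} ⋯ (Sᵐ)^{J m}` for a multi-index
`J ∈ ℕ^m`, and `|J|!/J!` for its weight.  Then for every `p ≥ 1` and every `j`,
`Σ_{|I|=p} (|I|!/I!) d_I S^I d_j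
   = d_j (Σ_{|I|=p} (|I|!/I!) d_I S^I + r p Σ_{|J|=p−1} (|J|!/J!) d_J S^J)`. -/
theorem lemma4_multiindex_commutation
    (M : Type) [AddCommGroup M] [Module ℝ M] (m : ℕ)
    (d S : Fin m → Module.End ℝ M) (r : ℝ)
    (hd : ∀ i j, d i * d j = d j * d i)
    (hS : ∀ i j, S i * S j = S j * S i)
    (hSd : ∀ i j, S i * d j - d j * S i = (if i = j then r else 0) • (1 : Module.End ℝ M))
    (dJ SJ : (Fin m → ℕ) → Module.End ℝ M)
    (hdJ : ∀ J, dJ J = (List.ofFn fun i => d i ^ J i).prod)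
    (hSJ : ∀ J, SJ J = (List.ofFn fun i => S i ^ J i).prod)
    (w : (Fin m → ℕ) → ℝ)
    (hw : ∀ J, w J = ((∑ i, J i).factorial : ℝ) / ∏ i, ((J i).factorial : ℝ))
    (p : ℕ) (hp : 1 ≤ p) (j : Fin m) :
    ∑ I ∈ Finset.Nat.antidiagonalTuple m p, w I • (dJ I * SJ I * d j)
      = d j * (∑ I ∈ Finset.Nat.antidiagonalTuple m p, w I • (dJ I * SJ I)
          + (r * (p : ℝ)) •
            ∑ J ∈ Finset.Nat.antidiagonalTuple m (p - 1), w J • (dJ J * SJ J)) := by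
  classical
  set A := Finset.Nat.antidiagonalTuple m p with hA
  set B := Finset.Nat.antidiagonalTuple m (p - 1) with hB
  -- shorthand for up/down moves on multi-indices
  set up : (Fin m → ℕ) → (Fin m → ℕ) := fun J => Function.update J j (J j + 1) with hup
  set down : (Fin m → ℕ) → (Fin m → ℕ) := fun I => Function.update I j (I j - 1) with hdown
  -- commuting products for S
  set Qs : (Fin m → ℕ) → Module.End ℝ M := fun J =>
    (Finset.univ.erase j).noncommProd (fun i => S i ^ J i)
      (fun a _ b _ _ => Commute.pow_pow (hS a b) _ _) with hQs
  set Qd : (Fin m → ℕ) → Module.End ℝ M := fun J =>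
    (Finset.univ.erase j).noncommProd (fun i => d i ^ J i)
      (fun a _ b _ _ => Commute.pow_pow (hd a b) _ _) with hQd
  have hSsplit : ∀ J, SJ J = S j ^ J j * Qs J := by
    intro J
    rw [hSJ]
    exact aux_extract _ (fun i k => Commute.pow_pow (hS i k) _ _) j
  have hdsplit : ∀ J, dJ J = d j ^ J j * Qd J := by
    intro J
    rw [hdJ]
    exact aux_extract _ (fun i k => Commute.pow_pow (hd i k) _ _) j
  have hSd' : ∀ i, i ≠ j → S i * d j = d j * S i := by
    intro i hij
    have h := hSd i j
    rw [if_neg hij, zero_smul, sub_eq_zero] at h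
    exact h
  have hSjd : S j * d j = d j * S j + r • (1 : Module.End ℝ M) := by
    have h := hSd j j
    rw [if_pos rfl, sub_eq_iff_eq_add] at h
    rw [h, add_comm]
  have hQs_comm : ∀ J, Commute (d j) (Qs J) := by
    intro J
    refine Finset.noncommProd_commute _ _ _ _ (fun i hi => ?_)
    have hij : i ≠ j := Finset.ne_of_mem_erase hi
    exact Commute.pow_right ((hSd' i hij).symm) _
  have hQs_congr : ∀ (J : Fin m → ℕ) (v : ℕ), Qs (Function.update J j v) = Qs J := by
    intro J v
    refine Finset.noncommProd_congr rfl (fun i hi => ?_) _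
    rw [Function.update_of_ne (Finset.ne_of_mem_erase hi)]
  have hQd_congr : ∀ (J : Fin m → ℕ) (v : ℕ), Qd (Function.update J j v) = Qd J := by
    intro J v
    refine Finset.noncommProd_congr rfl (fun i hi => ?_) _
    rw [Function.update_of_ne (Finset.ne_of_mem_erase hi)]
  have hdJ_comm : ∀ J, Commute (d j) (dJ J) := by
    intro J
    rw [hdJ]
    refine Commute.list_prod_right _ _ (fun x hx => ?_)
    rw [List.mem_ofFn] at hx
    obtain ⟨i, rfl⟩ := hx
    exact Commute.pow_right (hd j i) _
  have hkey : ∀ I, SJ I * d j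
      = d j * SJ I + ((I j : ℝ) * r) • SJ (down I) := by
    intro I
    rw [hSsplit I, hSsplit (down I)]
    simp only [hdown]
    rw [hQs_congr, Function.update_self]
    rw [mul_assoc, ← (hQs_comm I).eq, ← mul_assoc,
      aux_pow_comm (S j) (d j) r hSjd (I j), add_mul, smul_mul_assoc, mul_assoc]
  have hdup : ∀ J, dJ (up J) = d j * dJ J := by
    intro J
    rw [hdsplit (up J), hdsplit J]
    simp only [hup]
    rw [hQd_congr, Function.update_self, pow_succ', mul_assoc]
  -- sum of an index function over an update
  have hsum_up : ∀ (J : Fin m → ℕ) (v : ℕ),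
      ∑ i, Function.update J j v i = v + (∑ i, J i) - J j := by
    intro J v
    rw [Finset.sum_update_of_mem (Finset.mem_univ j), Finset.sdiff_singleton_eq_erase]
    have h2 : J j + ∑ i ∈ Finset.univ.erase j, J i = ∑ i, J i :=
      Finset.add_sum_erase _ J (Finset.mem_univ j)
    omega
  -- Step 1: expand each term of the LHS
  have step1 : ∑ I ∈ A, w I • (dJ I * SJ I * d j)
      = (∑ I ∈ A, w I • (d j * (dJ I * SJ I)))
        + ∑ I ∈ A, (w I * ((I j : ℝ) * r)) • (dJ I * SJ (down I)) := by
    rw [← Finset.sum_add_distrib]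
    refine Finset.sum_congr rfl (fun I _ => ?_)
    rw [mul_assoc, hkey I, mul_add, mul_smul_comm, ← mul_assoc, ← (hdJ_comm I).eq,
      mul_assoc, smul_add, smul_smul]
  -- Step 2: reindex the second sum
  have step2 : ∑ I ∈ A, (w I * ((I j : ℝ) * r)) • (dJ I * SJ (down I))
      = ∑ J ∈ B, (r * (p : ℝ) * w J) • (d j * (dJ J * SJ J)) := by
    rw [← Finset.sum_filter_of_ne (p := fun I => I j ≠ 0)
      (fun I _ hF h0 => by simp [h0] at hF)]
    symm
    refine Finset.sum_nbij' (i := up) (j := down) ?_ ?_ ?_ ?_ ?_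
    · intro J hJ
      rw [hB, Finset.Nat.mem_antidiagonalTuple] at hJ
      rw [Finset.mem_filter, Finset.Nat.mem_antidiagonalTuple]
      refine ⟨?_, ?_⟩
      · rw [hup]; dsimp only; rw [hsum_up]; omega
      · simp [hup]
    · intro I hI
      rw [Finset.mem_filter, Finset.Nat.mem_antidiagonalTuple] at hI
      rw [hB, Finset.Nat.mem_antidiagonalTuple, hdown]
      dsimp only
      rw [hsum_up]
      have hj1 : 1 ≤ I j := Nat.one_le_iff_ne_zero.mpr hI.2
      have hle : I j ≤ ∑ i, I i := Finset.single_le_sum (fun i _ => Nat.zero_le _) (Finset.mem_univ j)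
      omega
    · intro J hJ
      simp only [hup, hdown, Function.update_idem, Function.update_self, Nat.add_sub_cancel,
        Function.update_eq_self]
    · intro I hI
      rw [Finset.mem_filter] at hI
      have hj1 : I j ≠ 0 := hI.2
      simp only [hup, hdown, Function.update_idem, Function.update_self]
      rw [Nat.sub_add_cancel (Nat.one_le_iff_ne_zero.mpr hj1), Function.update_eq_self]
    · intro J hJ
      rw [hB, Finset.Nat.mem_antidiagonalTuple] at hJ
      have hdownup : down (up J) = J := by
        simp only [hup, hdown, Function.update_idem, Function.update_self, Nat.add_sub_cancel,
          Function.update_eq_self]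
      rw [hdownup, hdup J]
      have hupj : (up J) j = J j + 1 := by simp [hup]
      have hwup : w (up J) * ((J j : ℝ) + 1) = (p : ℝ) * w J := by
        rw [hw, hw]
        exact aux_w p hp J j hJ
      rw [hupj]
      push_cast
      rw [show w (up J) * (((J j : ℝ) + 1) * r) = (w (up J) * ((J j : ℝ) + 1)) * r by ring,
        hwup, mul_assoc]
      ring_nf
      rw [← mul_assoc (d j)]
  -- Step 3: expand the RHS
  rw [step1, step2, mul_add, Finset.mul_sum, Finset.smul_sum, Finset.mul_sum]
  congr 1
  · exact Finset.sum_congr rfl (fun I _ => (mul_smul_comm _ _ _).symm)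
  · refine Finset.sum_congr rfl (fun J _ => ?_)
    rw [smul_smul, mul_smul_comm]
end

section
/- In the polynomial model with variables u^α_I (|I| ≤ 1, α ∈ {1,...,n}, m ≥ 2, indices i,j ∈ {1,...,m}), the vector-valued 2-form Φ = Σ_{α,i,j} du^α_i ∧ du^α_j ⊗ dt^i ∧ dt^j satisfies d_T Φ = 0, but there is no Ψ = Σ Ψ_{αβj} du^α ∧ du^β ⊗ dt^j with coefficients Ψ_{αβj} functions of the order-0 variables and antisymmetric in (α,β) such that d_T Ψ = Φ; here d_T(θ ⊗ w) = Σ_k d_k θ ⊗ dt^k ∧ w with d_k the total derivative. -/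
open MvPolynomial Finset

/-- Index type of the jet variables `u^α_I`. -/
def JetIdx (n m : ℕ) : Type := Fin n × (Fin m → ℕ)

/-- The polynomial ring in the jet variables (the "functions"). -/
def JetPoly (n m : ℕ) : Type := MvPolynomial (JetIdx n m) ℝ

noncomputable instance (n m : ℕ) : CommRing (JetPoly n m) :=
  inferInstanceAs (CommRing (MvPolynomial (JetIdx n m) ℝ))

/-- The algebra of forms: the exterior algebra over `JetPoly` on the free module
generated by the symbols `du^α_I` and `dt^i`. -/
def FormAlg (n m : ℕ) : Type :=
  ExteriorAlgebra (JetPoly n m) ((JetIdx n m ⊕ Fin m) →₀ JetPoly n m)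

noncomputable instance (n m : ℕ) : Ring (FormAlg n m) :=
  inferInstanceAs (Ring (ExteriorAlgebra (JetPoly n m) _))

noncomputable instance (n m : ℕ) : Algebra (JetPoly n m) (FormAlg n m) :=
  inferInstanceAs (Algebra (JetPoly n m) (ExteriorAlgebra (JetPoly n m) _))

noncomputable instance (n m : ℕ) : Module ℝ (JetPoly n m) :=
  inferInstanceAs (Module ℝ (MvPolynomial (JetIdx n m) ℝ))

instance (n m : ℕ) : SMulCommClass ℝ (JetPoly n m) (JetPoly n m) :=
  Algebra.to_smulCommClass (R := ℝ) (A := MvPolynomial (JetIdx n m) ℝ)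

noncomputable instance (n m : ℕ) : Module (JetPoly n m) (FormAlg n m) :=
  inferInstanceAs (Module (JetPoly n m) (ExteriorAlgebra (JetPoly n m) _))

/-- The generator `du^α_I`. -/
noncomputable def du {n m : ℕ} (v : JetIdx n m) : FormAlg n m :=
  ExteriorAlgebra.ι (JetPoly n m) (Finsupp.single (Sum.inl v) 1)

/-- The generator `dt^i`. -/
noncomputable def dt {n m : ℕ} (i : Fin m) : FormAlg n m :=
  ExteriorAlgebra.ι (JetPoly n m) (Finsupp.single (Sum.inr i) 1)

/-- The unit multi-index `1_i`. -/
def unitIdx {m : ℕ} (i : Fin m) : Fin m → ℕ := Pi.single i 1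

/-- The total derivative `d_i = Σ_{|I| ≤ 1} u^α_{I+1_i} ∂/∂u^α_I` acting on
functions (polynomials) involving at most first-order variables. -/
noncomputable def Dtot {n m : ℕ} (i : Fin m) : JetPoly n m →ₗ[ℝ] JetPoly n m :=
  ∑ α : Fin n, ∑ p ∈ Finset.range 2, ∑ I ∈ Finset.Nat.antidiagonalTuple m p,
    (LinearMap.mulLeft ℝ (A := JetPoly n m) (X (α, I + unitIdx i))).comp
      (MvPolynomial.pderiv (α, I)).toLinearMap

/-- The `d_T`-closed form `Φ = Σ_{α,i,j} du^α_i ∧ du^α_j ⊗ dt^i ∧ dt^j`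
(a tensor `θ ⊗ w` being encoded as the product `θ * w` in `FormAlg`). -/
noncomputable def PhiForm (n m : ℕ) : FormAlg n m :=
  ∑ α : Fin n, ∑ i : Fin m, ∑ j : Fin m,
    du (α, unitIdx i) * du (α, unitIdx j) * dt i * dt j



/-! ### Auxiliary material for the proof -/

instance (n m : ℕ) : DecidableEq (JetIdx n m) :=
  inferInstanceAs (DecidableEq (Fin n × (Fin m → ℕ)))
instance (n m : ℕ) : CharZero (JetPoly n m) :=
  inferInstanceAs (CharZero (MvPolynomial (JetIdx n m) ℝ))

lemma cancel5 {A : Type*} [Ring A] (C x y w : A) (h : x*y + y*x = 0) :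
    C*x*y*w + C*y*x*w = 0 := by
  have e : C*x*y*w + C*y*x*w = C*(x*y + y*x)*w := by noncomm_ring
  rw [e, h, mul_zero, zero_mul]

lemma cancel3 {A : Type*} [Ring A] (x y z : A) (hxy : x*y+y*x=0)
    (hxz : x*z+z*x=0) (hyz : y*z+z*y=0) :
    x*y*z + z*y*x = 0 := by
  have h1 : z*y = -(y*z) := eq_neg_of_add_eq_zero_right hyz
  have h2 : z*x = -(x*z) := eq_neg_of_add_eq_zero_right hxz
  have h3 : y*x = -(x*y) := eq_neg_of_add_eq_zero_right hxy
  have e : z*y*x = -(x*y*z) := by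
    calc z*y*x = (-(y*z))*x := by rw [← h1]
    _ = -(y*(z*x)) := by noncomm_ring
    _ = -(y*(-(x*z))) := by rw [h2]
    _ = (y*x)*z := by noncomm_ring
    _ = (-(x*y))*z := by rw [h3]
    _ = -(x*y*z) := by noncomm_ring
  rw [e, add_neg_cancel]

lemma cancelC {A : Type*} [Ring A] (C x y z w : A) (h : x*y*z + z*y*x = 0) :
    C*w*x*y*z + C*w*z*y*x = 0 := by
  have e : C*w*x*y*z + C*w*z*y*x = (C*w)*(x*y*z + z*y*x) := by noncomm_ring
  rw [e, h, mul_zero]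

lemma xyx {A : Type*} [Ring A] (x y : A) (hxx : x*x = 0) (hxy : x*y + y*x = 0) :
    x*y*x = 0 := by
  have h1 : y*x = -(x*y) := eq_neg_of_add_eq_zero_right hxy
  calc x*y*x = x*(y*x) := by rw [mul_assoc]
  _ = x*(-(x*y)) := by rw [h1]
  _ = -((x*x)*y) := by noncomm_ring
  _ = 0 := by rw [hxx, zero_mul, neg_zero]

lemma cxxw {A : Type*} [Ring A] (C x w : A) (h : x*x = 0) : C*x*x*w = 0 := by
  have e : C*x*x*w = C*(x*x)*w := by noncomm_ring
  rw [e, h, mul_zero, zero_mul]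

lemma c5zero {A : Type*} [Ring A] (C w x y z : A) (h : x*y*z = 0) : C*w*x*y*z = 0 := by
  have e : C*w*x*y*z = (C*w)*(x*y*z) := by noncomm_ring
  rw [e, h, mul_zero]

lemma sum_antisymm {A : Type*} [AddCommGroup A] {m : ℕ} (f : Fin m → Fin m → A)
    (h : ∀ k i, f k i + f i k = 0) (hd : ∀ k, f k k = 0) :
    ∑ k : Fin m, ∑ i : Fin m, f k i = 0 := by
  rw [← Finset.sum_product']
  refine Finset.sum_ninvolution Prod.swap (fun a => h a.1 a.2) ?_
    (fun a => Finset.mem_univ _) (fun a => Prod.swap_swap a)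
  intro a hfa heq
  have : a.2 = a.1 := congrArg Prod.fst heq
  exact hfa (by rw [show a = (a.1, a.2) from rfl, this, hd])

noncomputable section
namespace CEx

variable {n m : ℕ}

open ExteriorAlgebra

lemma dt_swap (i k : Fin m) : (dt i : FormAlg n m) * dt k + dt k * dt i = 0 :=
  ExteriorAlgebra.ι_add_mul_swap _ _

lemma dt_sq (k : Fin m) : (dt k : FormAlg n m) * dt k = 0 :=
  ExteriorAlgebra.ι_sq_zero _

/-- the four reference keys -/
def kvec (α0 : Fin n) (i0 j0 : Fin m) : Fin 4 → (JetIdx n m ⊕ Fin m) :=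
  ![Sum.inl (α0, unitIdx i0), Sum.inl (α0, unitIdx j0), Sum.inr i0, Sum.inr j0]

def altF (α0 : Fin n) (i0 j0 : Fin m) :
    ((JetIdx n m ⊕ Fin m) →₀ JetPoly n m) [⋀^Fin 4]→ₗ[JetPoly n m] JetPoly n m :=
  (Matrix.detRowAlternating).compLinearMap
    (LinearMap.pi fun r : Fin 4 => Finsupp.lapply (kvec α0 i0 j0 r))

def phiMap (α0 : Fin n) (i0 j0 : Fin m) : FormAlg n m →ₗ[JetPoly n m] JetPoly n m :=
  ExteriorAlgebra.liftAlternating (fun k => match k with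
    | 4 => altF α0 i0 j0
    | _ => 0)

/-- the matrix whose determinant `phiMap` computes -/
def kmat (α0 : Fin n) (i0 j0 : Fin m) (a : Fin 4 → (JetIdx n m ⊕ Fin m)) :
    Matrix (Fin 4) (Fin 4) (JetPoly n m) :=
  Matrix.of fun r s => if a r = kvec α0 i0 j0 s then 1 else 0

/-- a generator of `FormAlg` -/
def gen (a : JetIdx n m ⊕ Fin m) : FormAlg n m :=
  ExteriorAlgebra.ι (JetPoly n m) (Finsupp.single a 1)

lemma du_eq_gen (v : JetIdx n m) : du v = gen (Sum.inl v) := rfl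
lemma dt_eq_gen (i : Fin m) : (dt i : FormAlg n m) = gen (Sum.inr i) := rfl

lemma phiMap_four (α0 : Fin n) (i0 j0 : Fin m) (a b c d : JetIdx n m ⊕ Fin m) :
    phiMap α0 i0 j0 (gen a * gen b * gen c * gen d)
      = (kmat α0 i0 j0 ![a, b, c, d]).det := by
  have h1 : gen a * gen b * gen c * gen d
      = ExteriorAlgebra.ιMulti (JetPoly n m) 4
          (fun r => Finsupp.single (![a, b, c, d] r) (1 : JetPoly n m)) := by
    rw [ExteriorAlgebra.ιMulti_apply]
    show _ = List.prod _
    simp only [List.ofFn_succ, List.ofFn_zero, List.prod_cons, List.prod_nil,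
      Matrix.cons_val_zero, Matrix.cons_val_one, Matrix.head_cons,
      Matrix.cons_val_succ, mul_one]
    show gen a * gen b * gen c * gen d = gen a * (gen b * (gen c * (gen d * 1)))
    noncomm_ring
  rw [h1]
  show ExteriorAlgebra.liftAlternating _ _ = _
  rw [ExteriorAlgebra.liftAlternating_apply_ιMulti]
  show (altF α0 i0 j0) _ = _
  rw [altF, AlternatingMap.compLinearMap_apply]
  show Matrix.det (Matrix.of _) = _
  congr 1
  ext r s
  simp [kmat, Finsupp.lapply, Finsupp.single_apply]

lemma unitIdx_ne_zero (i : Fin m) : unitIdx i ≠ (0 : Fin m → ℕ) := by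
  intro h
  have := congrFun h i
  simp [unitIdx] at this

lemma unitIdx_inj {i j : Fin m} : unitIdx i = unitIdx j ↔ i = j := by
  constructor
  · intro h
    by_contra hne
    have := congrFun h i
    simp [unitIdx, Pi.single_apply, hne] at this
  · rintro rfl; rfl

lemma det_zero_row (α0 : Fin n) (i0 j0 : Fin m) (a : Fin 4 → (JetIdx n m ⊕ Fin m))
    (r : Fin 4) (h : ∀ s, a r ≠ kvec α0 i0 j0 s) :
    (kmat α0 i0 j0 a).det = 0 := by
  apply Matrix.det_eq_zero_of_row_eq_zero r
  intro s
  simp [kmat, h s]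

lemma zero_ne_unitIdx (i : Fin m) : ¬ (0 : Fin m → ℕ) = unitIdx i :=
  fun h => unitIdx_ne_zero i h.symm

lemma kvec_ne_inl_zero (α0 : Fin n) (i0 j0 : Fin m) (γ : Fin n) (s : Fin 4) :
    Sum.inl (γ, (0 : Fin m → ℕ)) ≠ kvec α0 i0 j0 s := by
  fin_cases s <;> simp [kvec] <;> intro h
  · have h'' := congrArg Prod.snd (Sum.inl_injective h); exact zero_ne_unitIdx _ h''
  · have h'' := congrArg Prod.snd (Sum.inl_injective h); exact zero_ne_unitIdx _ h''
  · exact Sum.inl_ne_inr h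
  · exact Sum.inl_ne_inr h

lemma det4_block {R : Type*} [CommRing R] (a b c d e f g h : R) :
    (Matrix.of ![![a,b,0,0],![c,d,0,0],![0,0,e,f],![0,0,g,h]] :
        Matrix (Fin 4) (Fin 4) R).det
      = (a*d - b*c) * (e*h - f*g) := by
  simp [Matrix.det_succ_row_zero, Fin.sum_univ_succ]
  simp only [show Fin.succAbove (1 : Fin 4) (2 : Fin 3) = 3 from by decide]
  simp
  ring

lemma ite_pair (α0 α : Fin n) (i k : Fin m) :
    (if (α, unitIdx i) = (α0, unitIdx k) then (1 : JetPoly n m) else 0)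
      = if α = α0 ∧ i = k then 1 else 0 := by
  by_cases h : α = α0 ∧ i = k
  · rcases h with ⟨rfl, rfl⟩; simp
  · rw [if_neg h, if_neg]
    intro he
    exact h ⟨(Prod.ext_iff.1 he).1, unitIdx_inj.1 (Prod.ext_iff.1 he).2⟩

lemma kmat_phi_eq (α0 : Fin n) (i0 j0 : Fin m) (α : Fin n) (i j : Fin m) :
    kmat α0 i0 j0
        ![Sum.inl (α, unitIdx i), Sum.inl (α, unitIdx j), Sum.inr i, Sum.inr j]
      = Matrix.of
        ![![if α=α0 ∧ i=i0 then 1 else 0, if α=α0 ∧ i=j0 then 1 else 0, 0, 0],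
          ![if α=α0 ∧ j=i0 then 1 else 0, if α=α0 ∧ j=j0 then 1 else 0, 0, 0],
          ![0, 0, if i=i0 then 1 else 0, if i=j0 then 1 else 0],
          ![0, 0, if j=i0 then 1 else 0, if j=j0 then 1 else 0]] := by
  ext r s
  fin_cases r <;> fin_cases s <;>
    first
      | (simp [kmat, kvec, Matrix.vecHead, Matrix.vecTail]; done)
      | (simp [kmat, kvec, Matrix.vecHead, Matrix.vecTail]; rw [← ite_pair]; exact if_congr Sum.inl_injective.eq_iff rfl rfl)

lemma ite_combine (α0 : Fin n) (i0 j0 : Fin m) (hij : i0 ≠ j0) (α : Fin n) (i j : Fin m) :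
    ((if α=α0 ∧ i=i0 then (1:JetPoly n m) else 0) * (if α=α0 ∧ j=j0 then 1 else 0)
      - (if α=α0 ∧ i=j0 then 1 else 0) * (if α=α0 ∧ j=i0 then 1 else 0)) *
    ((if i=i0 then 1 else 0) * (if j=j0 then 1 else 0)
      - (if i=j0 then 1 else 0) * (if j=i0 then 1 else 0))
    = (if j = j0 then if i = i0 then if α = α0 then 1 else 0 else 0 else 0)
      + (if j = i0 then if i = j0 then if α = α0 then 1 else 0 else 0 else 0) := by
  by_cases hα : α = α0 <;> by_cases h1 : i = i0 <;> by_cases h2 : i = j0 <;>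
    by_cases h3 : j = i0 <;> by_cases h4 : j = j0 <;> simp_all

lemma phiMap_phi_term (α0 : Fin n) (i0 j0 : Fin m) (hij : i0 ≠ j0)
    (α : Fin n) (i j : Fin m) :
    phiMap α0 i0 j0 (du (α, unitIdx i) * du (α, unitIdx j) * dt i * dt j)
      = (if j = j0 then if i = i0 then if α = α0 then (1 : JetPoly n m) else 0 else 0 else 0)
        + (if j = i0 then if i = j0 then if α = α0 then 1 else 0 else 0 else 0) := by
  erw [du_eq_gen, du_eq_gen, dt_eq_gen, dt_eq_gen, phiMap_four, kmat_phi_eq, det4_block,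
    ite_combine α0 i0 j0 hij α i j]

lemma phiMap_Phi (α0 : Fin n) (i0 j0 : Fin m) (hij : i0 ≠ j0) :
    phiMap α0 i0 j0 (PhiForm n m) = 2 := by
  rw [PhiForm]
  simp only [map_sum, phiMap_phi_term α0 i0 j0 hij]
  simp [Finset.sum_add_distrib, Finset.sum_ite_eq', Finset.mem_univ]
  norm_num

lemma phiMap_zero1 (α0 : Fin n) (i0 j0 : Fin m) (α β : Fin n) (i j : Fin m) :
    phiMap α0 i0 j0 (du (α, 0) * du (β, 0) * dt i * dt j) = 0 := by
  erw [du_eq_gen, du_eq_gen, dt_eq_gen, dt_eq_gen, phiMap_four]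
  exact det_zero_row α0 i0 j0 _ 0 (fun s => kvec_ne_inl_zero α0 i0 j0 α s)

lemma phiMap_zero2 (α0 : Fin n) (i0 j0 : Fin m) (α β : Fin n) (k i j : Fin m) :
    phiMap α0 i0 j0 (du (α, unitIdx k) * du (β, 0) * dt i * dt j) = 0 := by
  erw [du_eq_gen, du_eq_gen, dt_eq_gen, dt_eq_gen, phiMap_four]
  exact det_zero_row α0 i0 j0 _ 1 (fun s => kvec_ne_inl_zero α0 i0 j0 β s)

lemma phiMap_zero3 (α0 : Fin n) (i0 j0 : Fin m) (α β : Fin n) (k i j : Fin m) :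
    phiMap α0 i0 j0 (du (α, 0) * du (β, unitIdx k) * dt i * dt j) = 0 := by
  erw [du_eq_gen, du_eq_gen, dt_eq_gen, dt_eq_gen, phiMap_four]
  exact det_zero_row α0 i0 j0 _ 0 (fun s => kvec_ne_inl_zero α0 i0 j0 α s)

end CEx
end

/-- `Φ` satisfies `d_T Φ = 0`, but no `Ψ = Σ Ψ_{αβj} du^α ∧ du^β ⊗ dt^j`
with coefficients `Ψ_{αβj}` depending only on order-0 variables and antisymmetric
in `(α,β)` has `d_T Ψ = Φ`. -/
theorem homogeneous_complex_not_exact_without_pullback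
    (n m : ℕ) (hn : 1 ≤ n) (hm : 2 ≤ m) :
    -- `d_T Φ = 0` :
    (∑ α : Fin n, ∑ k : Fin m, ∑ i : Fin m, ∑ j : Fin m,
        (du (α, unitIdx i + unitIdx k) * du (α, unitIdx j)
          + du (α, unitIdx i) * du (α, unitIdx j + unitIdx k)) * dt k * dt i * dt j
      = (0 : FormAlg n m))
    ∧
    -- no suitable `Ψ` has `d_T Ψ = Φ` :
    ∀ Ψc : Fin n → Fin n → Fin m → JetPoly n m,
      (∀ α β j, ∀ v ∈ (show MvPolynomial (JetIdx n m) ℝ from Ψc α β j).vars,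
        v.2 = 0) →
      (∀ α β j, Ψc α β j = - Ψc β α j) →
      (∑ α : Fin n, ∑ β : Fin n, ∑ i : Fin m, ∑ j : Fin m,
          (Dtot i (Ψc α β j)) • (du (α, 0) * du (β, 0) * dt i * dt j)
        + ∑ α : Fin n, ∑ β : Fin n, ∑ i : Fin m, ∑ j : Fin m,
            (Ψc α β j) •
              ((du (α, unitIdx i) * du (β, 0) + du (α, 0) * du (β, unitIdx i))
                * dt i * dt j))
        ≠ PhiForm n m := by
  classical
  constructor
  · -- `d_T Φ = 0`
    simp only [add_mul, Finset.sum_add_distrib]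
    have H1 : (∑ α : Fin n, ∑ k : Fin m, ∑ i : Fin m, ∑ j : Fin m,
        du (α, unitIdx i + unitIdx k) * du (α, unitIdx j) * dt k * dt i * dt j)
        = (0 : FormAlg n m) := by
      apply Finset.sum_eq_zero
      intro α _
      refine sum_antisymm
        (fun k i => ∑ j : Fin m,
          du (α, unitIdx i + unitIdx k) * du (α, unitIdx j) * dt k * dt i * dt j) ?_ ?_
      · intro k i
        rw [← Finset.sum_add_distrib]
        apply Finset.sum_eq_zero
        intro j _
        rw [show unitIdx k + unitIdx i = unitIdx i + unitIdx k from add_comm _ _]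
        exact cancel5 (du (α, unitIdx i + unitIdx k) * du (α, unitIdx j))
          (dt k) (dt i) (dt j) (CEx.dt_swap k i)
      · intro k
        apply Finset.sum_eq_zero
        intro j _
        exact cxxw (du (α, unitIdx k + unitIdx k) * du (α, unitIdx j)) (dt k) (dt j)
          (CEx.dt_sq k)
    have H2 : (∑ α : Fin n, ∑ k : Fin m, ∑ i : Fin m, ∑ j : Fin m,
        du (α, unitIdx i) * du (α, unitIdx j + unitIdx k) * dt k * dt i * dt j)
        = (0 : FormAlg n m) := by
      apply Finset.sum_eq_zero
      intro α _
      have hswap : (∑ k : Fin m, ∑ i : Fin m, ∑ j : Fin m,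
          du (α, unitIdx i) * du (α, unitIdx j + unitIdx k) * dt k * dt i * dt j)
          = ∑ k : Fin m, ∑ j : Fin m, ∑ i : Fin m,
            du (α, unitIdx i) * du (α, unitIdx j + unitIdx k) * dt k * dt i * dt j :=
        Finset.sum_congr rfl (fun k _ => Finset.sum_comm)
      rw [hswap]
      refine sum_antisymm
        (fun k j => ∑ i : Fin m,
          du (α, unitIdx i) * du (α, unitIdx j + unitIdx k) * dt k * dt i * dt j) ?_ ?_
      · intro k j
        rw [← Finset.sum_add_distrib]
        apply Finset.sum_eq_zero
        intro i _
        rw [show unitIdx k + unitIdx j = unitIdx j + unitIdx k from add_comm _ _]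
        exact cancelC (du (α, unitIdx i)) (dt k) (dt i) (dt j)
          (du (α, unitIdx j + unitIdx k))
          (cancel3 (dt k) (dt i) (dt j) (CEx.dt_swap k i) (CEx.dt_swap k j)
            (CEx.dt_swap i j))
      · intro k
        apply Finset.sum_eq_zero
        intro i _
        exact c5zero (du (α, unitIdx i)) (du (α, unitIdx k + unitIdx k))
          (dt k) (dt i) (dt k)
          (xyx (dt k) (dt i) (CEx.dt_sq k) (CEx.dt_swap k i))
    rw [H1, H2, add_zero]
  · -- non-exactness
    intro Ψc _ _ hEq
    set α0 : Fin n := ⟨0, hn⟩ with hα0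
    set i0 : Fin m := ⟨0, lt_of_lt_of_le (by norm_num) hm⟩ with hi0
    set j0 : Fin m := ⟨1, hm⟩ with hj0
    have hij : i0 ≠ j0 := by
      simp [hi0, hj0, Fin.ext_iff]
    have h2 := congrArg (CEx.phiMap α0 i0 j0) hEq
    simp only [add_mul, map_add, map_sum, map_smul, CEx.phiMap_zero1, CEx.phiMap_zero2,
      CEx.phiMap_zero3, smul_zero, add_zero, Finset.sum_const_zero,
      CEx.phiMap_Phi α0 i0 j0 hij] at h2
    exact absurd h2.symm (by norm_num)
end

section
/- Let B^{r,s} and maps d, d_T, P be as in a bicomplex with d d_T = d_T d, d² = 0, d_T² = 0, and d_T P + P d_T = id on B^{r,s} for 1 ≤ s ≤ m. Suppose the rows are exact: ker(d : B^{r,m} → B^{r+1,m}) = im(d : B^{r−1,m} → B^{r,m}) for r ≥ 1, and ker(d_T d : B^{r,m-1} → B^{r+1,m}) ⊆ im d + im d_T (the conclusion of Lemma 5 at s = m−1). Then ker(δ∘p_r : B^{r,m} → Ξ^{r+1}) ⊆ im(d : B^{r−1,m} → B^{r,m}) + im(d_T : B^{r,m−1} → B^{r,m}), where Ξ^{r+1}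 = B^{r+1,m}/d_T(B^{r+1,m−1}), p is the quotient projection, and δ : Ξ^r → Ξ^{r+1} is the map induced by d on the quotients. -/
/-- Lemma 7 of the paper, first assertion: In a bicomplex `B^{r,s}`
(with `m = u + 2`, commuting differentials `d`, `d_T`, `d² = 0`, `d_T² = 0`) with
homotopy operators `P` satisfying `d_T P + P d_T = id` on `B^{r,s}` for
`1 ≤ s ≤ m`, suppose the bottom row is exact
(`ker d = im d` on `B^{r,m}` for `r ≥ 1`) and the conclusion of Lemma 5 holds at
`s = m − 1` (`ker (d_T d) ⊆ im d + im d_T`).  Then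
`ker (δ ∘ p_r : B^{r,m} → Ξ^{r+1}) ⊆ im d + im d_T`, i.e. whenever
`d Φ ∈ d_T(B^{r+1,m−1})` one has `Φ = d Ψ + d_T Y` (stated with `r` replaced by
`r + 1`; `δ ∘ p_r Φ = 0` in `Ξ^{r+1} = B^{r+1,m}/d_T(B^{r+1,m−1})` means exactly
`d Φ ∈ im d_T`). -/
theorem lemma7_bottom_row_exactness
    (u : ℕ) (B : ℕ → ℕ → Type)
    [∀ r s, AddCommGroup (B r s)] [∀ r s, Module ℝ (B r s)]
    (d : ∀ r s, B r s →ₗ[ℝ] B (r + 1) s)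
    (dT : ∀ r s, B r s →ₗ[ℝ] B r (s + 1))
    (hcomm : ∀ r s (x : B r s), dT (r + 1) s (d r s x) = d r (s + 1) (dT r s x))
    (hdd : ∀ r s (x : B r s), d (r + 1) s (d r s x) = 0)
    (hdTdT : ∀ r s (x : B r s), dT r (s + 1) (dT r s x) = 0)
    (P : ∀ r s, B r (s + 1) →ₗ[ℝ] B r s)
    (hhomotopy : ∀ r s, s + 1 ≤ u + 2 →
      ∀ x : B r (s + 1), dT r s (P r s x) + P r (s + 1) (dT r (s + 1) x) = x)
    (hrowexact : ∀ r (x : B (r + 1) (u + 2)),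
      d (r + 1) (u + 2) x = 0 → ∃ y : B r (u + 2), d r (u + 2) y = x)
    (hlemma5 : ∀ r (x : B (r + 1) (u + 1)),
      dT (r + 2) (u + 1) (d (r + 1) (u + 1) x) = 0 →
      ∃ (y : B r (u + 1)) (z : B (r + 1) u),
        x = d r (u + 1) y + dT (r + 1) u z)
    (r : ℕ) (Φ : B (r + 1) (u + 2))
    (hΦ : ∃ X : B (r + 2) (u + 1), d (r + 1) (u + 2) Φ = dT (r + 2) (u + 1) X) :
    ∃ (Ψ : B r (u + 2)) (Y : B (r + 1) (u + 1)),
      Φ = d r (u + 2) Ψ + dT (r + 1) (u + 1) Y := by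
  obtain ⟨X, hX⟩ := hΦ
  set Φ0 : B (r + 2) (u + 1) := P (r + 2) (u + 1) (d (r + 1) (u + 2) Φ) with hΦ0
  have hdTΦ0 : dT (r + 2) (u + 1) Φ0 = d (r + 1) (u + 2) Φ := by
    have h := hhomotopy (r + 2) (u + 1) le_rfl (d (r + 1) (u + 2) Φ)
    have hz : dT (r + 2) (u + 2) (d (r + 1) (u + 2) Φ) = 0 := by
      rw [hX, hdTdT]
    rw [hz, map_zero, add_zero] at h
    exact h
  have hker : dT (r + 3) (u + 1) (d (r + 2) (u + 1) Φ0) = 0 := by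
    rw [hcomm, hdTΦ0, hdd]
  obtain ⟨y, z, hyz⟩ := hlemma5 (r + 1) Φ0 hker
  have hclosed : d (r + 1) (u + 2) (Φ - dT (r + 1) (u + 1) y) = 0 := by
    have hz0 : dT (r + 2) (u + 1) (dT (r + 1 + 1) u z) = 0 := hdTdT (r + 1 + 1) u z
    rw [map_sub, ← hdTΦ0, hyz, map_add, hz0, add_zero, sub_eq_zero]
    exact hcomm (r + 1) (u + 1) y
  obtain ⟨Ψ, hΨ⟩ := hrowexact r (Φ - dT (r + 1) (u + 1) y) hclosed
  exact ⟨Ψ, y, by rw [hΨ]; abel⟩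
end
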